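/- Let (X_a)_{a∈A} be a family of nonempty finite sets of integers indexed by a finite set A, and let (t_a)_{a∈A} be a family of integers minimizing |⋃_{a∈A} (X_a + t_a)| over all integer families. Then the intersection graph of the shifted family (X_a + t_a)_{a∈A} is connected. -/

import Mathlib

/-- The translate `S + t = {s + t : s ∈ S}`. -/
def shift (S : Finset ℤ) (t : ℤ) : Finset ℤ := S.image (· + t)

lemma shift_shift (S : Finset ℤ) (u s : ℤ) :
    shift S (u + s) = (shift S u).image (· + s) := by
  unfold shift
  rw [Finset.image_image]
  apply Finset.image_congr
  intro x _
  simp [Function.comp, add_assoc]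

lemma biUnion_union' {α β : Type*} [DecidableEq α] [DecidableEq β]
    (s t : Finset α) (f : α → Finset β) :
    (s ∪ t).biUnion f = s.biUnion f ∪ t.biUnion f := by
  ext x
  simp [Finset.mem_biUnion, Finset.mem_union, or_and_right, exists_or]

theorem stmt_7 {α : Type*} [Fintype α] [DecidableEq α] [Nonempty α]
    (X : α → Finset ℤ) (hX : ∀ a, (X a).Nonempty) (t : α → ℤ)
    (hmin : ∀ t' : α → ℤ,
      (Finset.univ.biUnion fun a => shift (X a) (t a)).card
        ≤ (Finset.univ.biUnion fun a => shift (X a) (t' a)).card) :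
    ∀ B C : Finset α, B.Nonempty → C.Nonempty → Disjoint B C → B ∪ C = Finset.univ →
      ∃ b ∈ B, ∃ c ∈ C, (shift (X b) (t b) ∩ shift (X c) (t c)).Nonempty := by
  intro B C hB hC hdisj hBC
  by_contra h
  push_neg at h
  set UB := B.biUnion (fun a => shift (X a) (t a)) with hUBdef
  set UC := C.biUnion (fun a => shift (X a) (t a)) with hUCdef
  have hdU : Disjoint UB UC := by
    rw [Finset.disjoint_left]
    intro x hxB hxC
    rw [hUBdef, Finset.mem_biUnion] at hxB
    rw [hUCdef, Finset.mem_biUnion] at hxC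
    obtain ⟨b, hb, hxb⟩ := hxB
    obtain ⟨c, hc, hxc⟩ := hxC
    exact (Finset.not_nonempty_iff_eq_empty.mpr (h b hb c hc)) ⟨x, Finset.mem_inter.mpr ⟨hxb, hxc⟩⟩
  have hUBne : UB.Nonempty := by
    obtain ⟨b, hb⟩ := hB
    obtain ⟨x, hx⟩ := hX b
    exact ⟨x + t b, Finset.mem_biUnion.mpr ⟨b, hb, Finset.mem_image_of_mem _ hx⟩⟩
  have hUCne : UC.Nonempty := by
    obtain ⟨c, hc⟩ := hC
    obtain ⟨y, hy⟩ := hX c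
    exact ⟨y + t c, Finset.mem_biUnion.mpr ⟨c, hc, Finset.mem_image_of_mem _ hy⟩⟩
  obtain ⟨x, hx⟩ := hUBne
  obtain ⟨y, hy⟩ := hUCne
  set s := x - y with hs
  set t' : α → ℤ := fun a => if a ∈ B then t a else t a + s with ht'
  have hnew : (Finset.univ.biUnion fun a => shift (X a) (t' a))
      = UB ∪ UC.image (· + s) := by
    rw [← hBC, biUnion_union']
    congr 1
    · apply Finset.biUnion_congr rfl
      intro a ha
      simp [ht', ha]
    · rw [hUCdef, Finset.biUnion_image]
      apply Finset.biUnion_congr rfl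
      intro a ha
      have haB : a ∉ B := Finset.disjoint_right.mp hdisj ha
      simp only [ht', if_neg haB]
      exact shift_shift _ _ _
  have hcardim : (UC.image (· + s)).card = UC.card :=
    Finset.card_image_of_injective _ (add_left_injective s)
  have hinter : x ∈ UB ∩ UC.image (· + s) := by
    refine Finset.mem_inter.mpr ⟨hx, Finset.mem_image.mpr ⟨y, hy, ?_⟩⟩
    simp [hs]
  have hlt : (UB ∪ UC.image (· + s)).card < UB.card + UC.card := by
    have := Finset.card_union_add_card_inter UB (UC.image (· + s))
    have hpos : 0 < (UB ∩ UC.image (· + s)).card :=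
      Finset.card_pos.mpr ⟨x, hinter⟩
    omega
  have hold : (Finset.univ.biUnion fun a => shift (X a) (t a)).card
      = UB.card + UC.card := by
    rw [← hBC, biUnion_union', ← hUBdef, ← hUCdef,
      Finset.card_union_of_disjoint hdU]
  have := hmin t'
  rw [hnew, hold] at this
  omega
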